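/- The function r(m) = #{(a,b) ∈ ℕ² : a, b ≥ 1, a^3 + b^3 = m} is unbounded: for every B there exists m with r(m) > B. -/

import Mathlib

/- We follow Hardy–Wright (Thm 412): iterate the tangent-line construction on the
   curve x³+y³=9 starting from (2,1).  Working with integer triples (a,b,c) with
   a³+b³=9c³, the 2-adic valuation of a strictly increases (giving distinct points),
   and a rational-interval dynamics argument shows that points with both coordinates
   positive recur infinitely often.  Scaling B+1 such rational points to a common
   denominator gives a number with more than B representations. -/

namespace SumTwoCubes

/-- The tangent-process sequence of integer triples on a³+b³ = 9c³. -/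
def seq : ℕ → ℤ × ℤ × ℤ
  | 0 => (2, 1, 1)
  | n+1 =>
    let p := seq n
    (p.1 * (p.1^3 + 2*p.2.1^3), -p.2.1 * (2*p.1^3 + p.2.1^3), p.2.2 * (p.1^3 - p.2.1^3))

def aa (n : ℕ) : ℤ := (seq n).1
def bb (n : ℕ) : ℤ := (seq n).2.1
def cc (n : ℕ) : ℤ := (seq n).2.2

lemma aa_succ (n : ℕ) : aa (n+1) = aa n * (aa n^3 + 2*bb n^3) := rfl
lemma bb_succ (n : ℕ) : bb (n+1) = -bb n * (2*aa n^3 + bb n^3) := rfl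
lemma cc_succ (n : ℕ) : cc (n+1) = cc n * (aa n^3 - bb n^3) := rfl

lemma odd_ne_zero {x : ℤ} (h : Odd x) : x ≠ 0 := by
  rintro rfl; simp at h

/-- Main invariant of the sequence. -/
lemma inv (n : ℕ) :
    aa n^3 + bb n^3 = 9 * cc n^3 ∧ (∃ o : ℤ, Odd o ∧ aa n = 2^(n+1) * o) ∧
      Odd (bb n) ∧ cc n ≠ 0 := by
  induction n with
  | zero =>
    refine ⟨by norm_num [aa, bb, cc, seq], ⟨1, ⟨0, by norm_num⟩, by norm_num [aa, seq]⟩,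
      ⟨0, by norm_num [bb, seq]⟩, by norm_num [cc, seq]⟩
  | succ n ih =>
    obtain ⟨h1, ⟨o, ho, hao⟩, hb, hc⟩ := ih
    have haev : Even (aa n) := by
      rw [hao]; exact Even.mul_right ⟨2^n, by ring⟩ o
    have ha3ev : Even (aa n ^ 3) := by
      rw [even_iff_two_dvd] at haev ⊢; exact dvd_pow haev (by norm_num)
    have hb3odd : Odd (bb n ^ 3) := hb.pow
    refine ⟨?_, ?_, ?_, ?_⟩
    · rw [aa_succ, bb_succ, cc_succ]
      linear_combination (aa n^3 - bb n^3)^3 * h1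
    · refine ⟨o * (2^(3*n+2) * o^3 + bb n^3), ?_, ?_⟩
      · refine ho.mul (Even.add_odd ?_ hb3odd)
        exact Even.mul_right ⟨2^(3*n+1), by ring⟩ _
      · rw [aa_succ, hao]; ring
    · rw [bb_succ]
      exact (hb.neg).mul (Even.add_odd ⟨aa n^3, by ring⟩ hb3odd)
    · rw [cc_succ]
      refine mul_ne_zero hc ?_
      intro h
      have : Odd (bb n ^3) := hb3odd
      have heq : aa n ^3 = bb n ^3 := by linarith [sub_eq_zero.mp h]
      rw [heq] at ha3ev
      exact (Int.not_odd_iff_even.mpr ha3ev) hb3odd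


/-- The rational dynamics variable s = (a/b)³. -/
noncomputable def sq (n : ℕ) : ℚ := (aa n : ℚ)^3 / (bb n : ℚ)^3

lemma bbQ_ne (n : ℕ) : ((bb n : ℚ)) ≠ 0 := by
  exact_mod_cast odd_ne_zero (inv n).2.2.1

lemma den_odd (n : ℕ) : Odd (2 * aa n ^3 + bb n ^3) := by
  exact Even.add_odd ⟨aa n^3, by ring⟩ ((inv n).2.2.1).pow

lemma sq_succ (n : ℕ) :
    sq (n+1) = -(sq n) * (sq n + 2)^3 / (2 * sq n + 1)^3 := by
  have hb := bbQ_ne n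
  have hd : (2 * (aa n : ℚ)^3 + (bb n : ℚ)^3) ≠ 0 := by
    exact_mod_cast odd_ne_zero (den_odd n)
  rw [sq, sq, aa_succ, bb_succ]
  push_cast
  field_simp

lemma sq_ne_zero (n : ℕ) : sq n ≠ 0 := by
  obtain ⟨o, ho, hao⟩ := (inv n).2.1
  have ha : (aa n : ℚ) ≠ 0 := by
    exact_mod_cast (by rw [hao]; exact mul_ne_zero (by positivity) (odd_ne_zero ho) : aa n ≠ 0)
  exact div_ne_zero (pow_ne_zero 3 ha) (pow_ne_zero 3 (bbQ_ne n))

lemma sq_eq_imp (n : ℕ) {q : ℚ} (h : sq n = q) : (aa n : ℚ)^3 = q * (bb n : ℚ)^3 := by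
  rw [← h, sq, div_mul_cancel₀]
  exact pow_ne_zero 3 (bbQ_ne n)

lemma sq_ne_neg_one (n : ℕ) : sq n ≠ -1 := by
  intro h
  have h2 := sq_eq_imp n h
  have hZ : (aa n)^3 = -(bb n)^3 := by
    have hQ : ((aa n : ℚ))^3 = -((bb n : ℚ))^3 := by linarith [h2]
    exact_mod_cast hQ
  obtain ⟨o, ho, hao⟩ := (inv n).2.1
  have hodd : Odd ((aa n)^3) := by rw [hZ]; exact (((inv n).2.2.1).pow).neg
  have hev : Even ((aa n)^3) := by
    rw [hao, even_iff_two_dvd]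
    exact Dvd.dvd.trans ⟨2^n * o, by ring⟩ (dvd_pow_self _ (by norm_num))
  exact (Int.not_odd_iff_even.mpr hev) hodd

lemma sq_ne_neg_two (n : ℕ) : sq n ≠ -2 := by
  intro h
  have h2 := sq_eq_imp n h
  have hZ : (aa n)^3 = -2 * (bb n)^3 := by
    have hQ : ((aa n : ℚ))^3 = -2 * ((bb n : ℚ))^3 := by linarith [h2]
    exact_mod_cast hQ
  obtain ⟨o, ho, hao⟩ := (inv n).2.1
  obtain ⟨k, hk⟩ : ∃ k, aa n = 2 * k := ⟨2^n * o, by rw [hao]; ring⟩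
  rw [hk] at hZ
  have h8 : 2 * ((bb n)^3) = 2 * (-4 * k^3) := by linear_combination hZ
  have h9 := mul_left_cancel₀ (by norm_num : (2:ℤ) ≠ 0) h8
  have hbev : Even ((bb n)^3) := by
    rw [even_iff_two_dvd]
    exact ⟨-2*k^3, by linarith⟩
  exact (Int.not_odd_iff_even.mpr hbev) ((inv n).2.2.1).pow

lemma sq_ne_neg_half (n : ℕ) : sq n ≠ -(1/2) := by
  intro h
  have h2 := sq_eq_imp n h
  have hZ : 2 * (aa n)^3 = -(bb n)^3 := by
    have hQ : 2 * ((aa n : ℚ))^3 = -((bb n : ℚ))^3 := by linarith [h2]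
    exact_mod_cast hQ
  have hbev : Even ((bb n)^3) := by
    rw [even_iff_two_dvd]
    exact ⟨-(aa n)^3, by linarith⟩
  exact (Int.not_odd_iff_even.mpr hbev) ((inv n).2.2.1).pow

lemma sq_den_ne (n : ℕ) : 2 * sq n + 1 ≠ 0 := by
  intro h
  exact sq_ne_neg_half n (by linarith)

/-- When s > 0 the corresponding point on x³+y³=9 has both coordinates positive. -/
lemma signs (n : ℕ) (h : 0 < sq n) : 0 < aa n * cc n ∧ 0 < bb n * cc n := by
  have hprod : (0:ℚ) < (aa n : ℚ)^3 * (bb n : ℚ)^3 := by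
    rcases div_pos_iff.mp (by rw [← sq]; exact h) with ⟨h1, h2⟩ | ⟨h1, h2⟩
    · exact mul_pos h1 h2
    · exact mul_pos_of_neg_of_neg h1 h2
  have hab : 0 < aa n * bb n := by
    have h3 : (0:ℤ) < (aa n * bb n)^3 := by
      have : (0:ℚ) < ((aa n : ℚ) * (bb n : ℚ))^3 := by rw [mul_pow]; exact hprod
      exact_mod_cast this
    exact (Odd.pow_pos_iff ⟨1, by norm_num⟩).mp h3
  have h1 := (inv n).1
  have hc := (inv n).2.2.2
  rcases lt_trichotomy (aa n) 0 with hA | hA | hA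
  · have hB : bb n < 0 := by nlinarith
    have ha3 : (aa n)^3 < 0 := Odd.pow_neg ⟨1, by norm_num⟩ hA
    have hb3 : (bb n)^3 < 0 := Odd.pow_neg ⟨1, by norm_num⟩ hB
    have hC : cc n < 0 := by
      by_contra hcon
      push_neg at hcon
      nlinarith [pow_nonneg hcon 3]
    constructor <;> nlinarith
  · simp [hA] at hab
  · have hB : 0 < bb n := by nlinarith
    have ha3 : 0 < (aa n)^3 := pow_pos hA 3
    have hb3 : 0 < (bb n)^3 := pow_pos hB 3
    have hC : 0 < cc n := by
      have : 0 < cc n ^ 3 := by linarith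
      exact (Odd.pow_pos_iff ⟨1, by norm_num⟩).mp this
    constructor <;> nlinarith


/-- Points with s > 0 recur infinitely often. -/
lemma pos_infinite (N : ℕ) : ∃ k, N ≤ k ∧ 0 < sq k := by
  by_contra hcon
  push_neg at hcon
  have hneg : ∀ k, N ≤ k → sq k < 0 := fun k hk =>
    lt_of_le_of_ne (hcon k hk) (sq_ne_zero k)
  have hA : ∀ k, N ≤ k → sq k < -(1/2) := by
    intro k hk
    rcases lt_trichotomy (sq k) (-(1/2)) with h | h | h
    · exact h
    · exact absurd h (sq_ne_neg_half k)
    · exfalso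
      have hk0 : sq k < 0 := hneg k hk
      have hpos : 0 < sq (k+1) := by
        rw [sq_succ]
        apply div_pos
        · exact mul_pos (by linarith) (pow_pos (by linarith) 3)
        · exact pow_pos (by linarith) 3
      linarith [hneg (k+1) (by omega)]
  have hB : ∀ k, N ≤ k → -2 < sq k := by
    intro k hk
    rcases lt_trichotomy (sq k) (-2) with h | h | h
    · exfalso
      have hpos : 0 < sq (k+1) := by
        rw [sq_succ]
        apply div_pos_of_neg_of_neg
        · exact mul_neg_of_pos_of_neg (by linarith [hneg k hk])
            (Odd.pow_neg ⟨1, by norm_num⟩ (by linarith))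
        · exact Odd.pow_neg ⟨1, by norm_num⟩ (by linarith)
      linarith [hneg (k+1) (by omega)]
    · exact absurd h (sq_ne_neg_two k)
    · exact h
  have hC : ∀ k, N ≤ k → -(3/2) < sq k := by
    intro k hk
    by_contra hcon2
    push_neg at hcon2
    have h2 := hB k hk
    have hd0 : (2 * sq k + 1) ≠ 0 := sq_den_ne k
    have hden : ((2 * sq k + 1)^3) < 0 :=
      Odd.pow_neg ⟨1, by norm_num⟩ (by linarith [hA k hk])
    have hnum : -2*(sq k)*(sq k+2)^3 + (2*(sq k)+1)^3 < 0 := by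
      have h0 : (0:ℚ) ≤ sq k + 2 := by linarith
      have h3 : (sq k+2)^3 ≤ (1/2)^3 := pow_le_pow_left₀ h0 (by linarith) 3
      have hp : -2*(sq k)*(sq k+2)^3 ≤ 4*(1/2)^3 := by nlinarith [pow_nonneg h0 3]
      have hw : (2:ℚ) ≤ -(2*(sq k)+1) := by linarith
      have hw3 : (2:ℚ)^3 ≤ (-(2*(sq k)+1))^3 := pow_le_pow_left₀ (by norm_num) hw 3
      nlinarith [hw3]
    have hhalf : sq (k+1) + 1/2 =
        (-2*(sq k)*(sq k+2)^3 + (2*(sq k)+1)^3) / (2*(2*(sq k)+1)^3) := by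
      rw [sq_succ, div_add' _ _ _ (pow_ne_zero 3 hd0),
        div_eq_div_iff (pow_ne_zero 3 hd0) (mul_ne_zero two_ne_zero (pow_ne_zero 3 hd0))]
      ring
    have hgt : -(1/2) < sq (k+1) := by
      have := div_pos_of_neg_of_neg hnum (by linarith : 2*(2*(sq k)+1)^3 < 0)
      rw [← hhalf] at this
      linarith
    linarith [hA (k+1) (by omega)]
  -- growth of (s+1)²
  have hE2 : ∀ k, N ≤ k → 2 * (sq k + 1)^2 ≤ (sq (k+1) + 1)^2 := by
    intro k hk
    have hd0 : (2 * sq k + 1) ≠ 0 := sq_den_ne k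
    have hid : sq (k+1) + 1 = (sq k + 1) * (1 - sq k)^3 / (2*sq k+1)^3 := by
      rw [sq_succ, div_add' _ _ _ (pow_ne_zero 3 hd0),
        div_eq_div_iff (pow_ne_zero 3 hd0) (pow_ne_zero 3 hd0)]
      ring
    have hS1 := hC k hk
    have hS2 := hA k hk
    have hineq : 2*((2*sq k+1)^3)^2 ≤ ((1-sq k)^3)^2 := by
      have hw : (0:ℚ) ≤ -5*(2*sq k+1) := by linarith
      have hu : -5*(2*sq k+1) ≤ 4*(1-sq k) := by linarith
      have h6 := pow_le_pow_left₀ hw hu 6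
      nlinarith [h6, sq_nonneg ((2*sq k+1)^3)]
    have hY : 0 < ((2*sq k+1)^3)^2 :=
      lt_of_le_of_ne (sq_nonneg _) (Ne.symm (pow_ne_zero 2 (pow_ne_zero 3 hd0)))
    have heq : (sq (k+1) + 1)^2 = (sq k+1)^2 * ((1-sq k)^3)^2 / ((2*sq k+1)^3)^2 := by
      rw [hid, div_pow, mul_pow]
    rw [heq, le_div_iff₀ hY]
    calc 2 * (sq k+1)^2 * ((2*sq k+1)^3)^2 = (sq k+1)^2 * (2*((2*sq k+1)^3)^2) := by ring
      _ ≤ (sq k+1)^2 * ((1-sq k)^3)^2 := mul_le_mul_of_nonneg_left hineq (sq_nonneg _)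
  have hgrow : ∀ j, 2^j * (sq N + 1)^2 ≤ (sq (N+j) + 1)^2 := by
    intro j
    induction j with
    | zero => simp
    | succ j ih =>
      calc 2^(j+1) * (sq N + 1)^2 = 2 * (2^j * (sq N + 1)^2) := by ring
        _ ≤ 2 * (sq (N+j) + 1)^2 := by linarith
        _ ≤ (sq (N+j+1) + 1)^2 := hE2 (N+j) (by omega)
  have hbound : ∀ k, N ≤ k → (sq k + 1)^2 < 1 := by
    intro k hk
    nlinarith [hC k hk, hA k hk]
  have hP0 : 0 < (sq N + 1)^2 := by
    have hne : sq N + 1 ≠ 0 := fun h => sq_ne_neg_one N (by linarith)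
    exact lt_of_le_of_ne (sq_nonneg _) (Ne.symm (pow_ne_zero 2 hne))
  obtain ⟨j, hj⟩ := pow_unbounded_of_one_lt (1/((sq N + 1)^2)) (one_lt_two : (1:ℚ) < 2)
  have h1 : 1 < 2^j * (sq N + 1)^2 := by
    rw [div_lt_iff₀ hP0] at hj
    linarith
  have := hgrow j
  have := hbound (N+j) (by omega)
  linarith


/-- A strictly increasing sequence of indices with positive s. -/
noncomputable def idx : ℕ → ℕ
  | 0 => (pos_infinite 0).choose
  | i+1 => (pos_infinite (idx i + 1)).choose

lemma idx_pos (i : ℕ) : 0 < sq (idx i) := by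
  cases i with
  | zero => exact (pos_infinite 0).choose_spec.2
  | succ i => exact (pos_infinite (idx i + 1)).choose_spec.2

lemma idx_strictMono : StrictMono idx := by
  apply strictMono_nat_of_lt_succ
  intro i
  have := (pos_infinite (idx i + 1)).choose_spec.1
  show idx i < (pos_infinite (idx i + 1)).choose
  omega

lemma pow2_aux {m n : ℕ} {u v : ℤ} (hu : Odd u) (h : 2^m * u = 2^n * v)
    (hlt : m < n) : False := by
  have h2 : ((2:ℤ)^m) ≠ 0 := by positivity
  have hexp : m + (n - m) = n := by omega
  have huv : u = 2^(n-m) * v := by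
    refine mul_left_cancel₀ h2 ?_
    rw [h, ← mul_assoc, ← pow_add, hexp]
  have hev : Even u := by
    rw [huv, even_iff_two_dvd]
    exact dvd_mul_of_dvd_left (dvd_pow_self 2 (by omega : n - m ≠ 0)) v
  exact (Int.not_odd_iff_even.mpr hev) hu

lemma pow2_inj {m n : ℕ} {u v : ℤ} (hu : Odd u) (hv : Odd v)
    (h : 2^m * u = 2^n * v) : m = n := by
  rcases lt_trichotomy m n with hlt | heq | hgt
  · exact absurd (pow2_aux hu h hlt) not_false
  · exact heq
  · exact absurd (pow2_aux hv h.symm hgt) not_false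

end SumTwoCubes

open SumTwoCubes

theorem sum_two_cubes_representations_unbounded :
    ∀ B : ℕ, ∃ m : ℕ,
      B < {p : ℕ × ℕ | 1 ≤ p.1 ∧ 1 ≤ p.2 ∧ p.1 ^ 3 + p.2 ^ 3 = m}.ncard := by
  classical
  intro B
  set K := B + 1 with hK
  set C : ℤ := ∏ i ∈ Finset.range K, |cc (idx i)| with hCdef
  have hCpos : 0 < C := Finset.prod_pos (fun i _ => abs_pos.mpr (inv (idx i)).2.2.2)
  have hdvd : ∀ i ∈ Finset.range K, cc (idx i) ∣ C := fun i hi =>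
    (abs_dvd _ _).mp (Finset.dvd_prod_of_mem _ hi)
  set w : ℕ → ℤ := fun i => C / cc (idx i) with hwdef
  have hcw : ∀ i ∈ Finset.range K, cc (idx i) * w i = C := fun i hi =>
    Int.mul_ediv_cancel' (hdvd i hi)
  have hw0 : ∀ i ∈ Finset.range K, w i ≠ 0 := by
    intro i hi h
    have := hcw i hi
    rw [h, mul_zero] at this
    omega
  have hupos : ∀ i ∈ Finset.range K, 0 < aa (idx i) * w i := by
    intro i hi
    have hs := (signs (idx i) (idx_pos i)).1
    have h1 : 0 < (aa (idx i) * w i) * (cc (idx i))^2 := by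
      have he : (aa (idx i) * w i) * (cc (idx i))^2
          = (aa (idx i) * cc (idx i)) * (cc (idx i) * w i) := by ring
      rw [he, hcw i hi]
      exact mul_pos hs hCpos
    nlinarith [sq_nonneg (cc (idx i))]
  have hvpos : ∀ i ∈ Finset.range K, 0 < bb (idx i) * w i := by
    intro i hi
    have hs := (signs (idx i) (idx_pos i)).2
    have h1 : 0 < (bb (idx i) * w i) * (cc (idx i))^2 := by
      have he : (bb (idx i) * w i) * (cc (idx i))^2
          = (bb (idx i) * cc (idx i)) * (cc (idx i) * w i) := by ring
      rw [he, hcw i hi]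
      exact mul_pos hs hCpos
    nlinarith [sq_nonneg (cc (idx i))]
  have hsum : ∀ i ∈ Finset.range K,
      (aa (idx i) * w i)^3 + (bb (idx i) * w i)^3 = 9 * C^3 := by
    intro i hi
    have h1 := (inv (idx i)).1
    calc (aa (idx i) * w i)^3 + (bb (idx i) * w i)^3
        = (aa (idx i)^3 + bb (idx i)^3) * (w i)^3 := by ring
      _ = 9 * (cc (idx i) * w i)^3 := by rw [h1]; ring
      _ = 9 * C^3 := by rw [hcw i hi]
  refine ⟨(9 * C^3).toNat, ?_⟩
  set S := {p : ℕ × ℕ | 1 ≤ p.1 ∧ 1 ≤ p.2 ∧ p.1 ^ 3 + p.2 ^ 3 = (9 * C^3).toNat} with hSdef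
  set f : ℕ → ℕ × ℕ :=
    fun i => ((aa (idx i) * w i).toNat, (bb (idx i) * w i).toNat) with hfdef
  set T : Finset (ℕ × ℕ) := (Finset.range K).image f with hTdef
  have hmnn : ((9 * C^3).toNat : ℤ) = 9 * C^3 := Int.toNat_of_nonneg (by positivity)
  have hTsub : ↑T ⊆ S := by
    intro p hp
    rw [hTdef] at hp
    simp only [Finset.coe_image, Set.mem_image, Finset.mem_coe] at hp
    obtain ⟨i, hi, rfl⟩ := hp
    have hu := hupos i hi
    have hv := hvpos i hi
    have hx : ((aa (idx i) * w i).toNat : ℤ) = aa (idx i) * w i := Int.toNat_of_nonneg hu.le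
    have hy : ((bb (idx i) * w i).toNat : ℤ) = bb (idx i) * w i := Int.toNat_of_nonneg hv.le
    refine ⟨by simp only [hfdef]; omega, by simp only [hfdef]; omega, ?_⟩
    have hgoal : (((aa (idx i) * w i).toNat ^ 3 + (bb (idx i) * w i).toNat ^ 3 : ℕ) : ℤ)
        = (((9 * C^3).toNat : ℕ) : ℤ) := by
      push_cast [hx, hy, hmnn]
      exact hsum i hi
    exact_mod_cast hgoal
  have hinj : Set.InjOn f (Finset.range K) := by
    intro i hi' j hj' hfij
    have hi : i ∈ Finset.range K := hi'
    have hj : j ∈ Finset.range K := hj'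
    have e1 : aa (idx i) * w i = aa (idx j) * w j := by
      have := congrArg Prod.fst hfij
      simp only [hfdef] at this
      rw [← Int.toNat_of_nonneg (hupos i hi).le, ← Int.toNat_of_nonneg (hupos j hj).le]
      exact_mod_cast this
    have e2 : bb (idx i) * w i = bb (idx j) * w j := by
      have := congrArg Prod.snd hfij
      simp only [hfdef] at this
      rw [← Int.toNat_of_nonneg (hvpos i hi).le, ← Int.toNat_of_nonneg (hvpos j hj).le]
      exact_mod_cast this
    have e3 : (aa (idx i) * bb (idx j)) * (w i * w j)
        = (aa (idx j) * bb (idx i)) * (w i * w j) := by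
      linear_combination (bb (idx j) * w j) * e1 - (aa (idx j) * w j) * e2
    have e4 : aa (idx i) * bb (idx j) = aa (idx j) * bb (idx i) :=
      mul_right_cancel₀ (mul_ne_zero (hw0 i hi) (hw0 j hj)) e3
    obtain ⟨oi, hoi, haoi⟩ := (inv (idx i)).2.1
    obtain ⟨oj, hoj, haoj⟩ := (inv (idx j)).2.1
    have e5 : 2^(idx i + 1) * (oi * bb (idx j)) = 2^(idx j + 1) * (oj * bb (idx i)) := by
      rw [haoi, haoj] at e4
      linear_combination e4
    have := pow2_inj (hoi.mul (inv (idx j)).2.2.1) (hoj.mul (inv (idx i)).2.2.1) e5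
    exact idx_strictMono.injective (by omega)
  have hTcard : T.card = K := by
    rw [hTdef, Finset.card_image_of_injOn hinj, Finset.card_range]
  have hSfin : S.Finite := by
    apply Set.Finite.subset
      ((Finset.range ((9*C^3).toNat + 1) ×ˢ Finset.range ((9*C^3).toNat + 1)).finite_toSet)
    intro p hp
    obtain ⟨h1, h2, h3⟩ := hp
    simp only [Finset.coe_product, Set.mem_prod, Finset.mem_coe, Finset.mem_range]
    constructor
    · have := Nat.le_self_pow (by norm_num : (3:ℕ) ≠ 0) p.1
      omega
    · have := Nat.le_self_pow (by norm_num : (3:ℕ) ≠ 0) p.2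
      omega
  calc B < K := by omega
    _ = T.card := hTcard.symm
    _ = (↑T : Set (ℕ × ℕ)).ncard := (Set.ncard_coe_finset T).symm
    _ ≤ S.ncard := Set.ncard_le_ncard hTsub hSfin
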